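/- Let U ⊆ ℝⁿ be open and u : U → ℝ upper semicontinuous and bounded. For every α, r > 0 there exists t₀ = t₀(α, r) > 0, depending only on L, α and r, such that whenever osc_U u ≤ α: (i) for all 0 < t < t₀ and all x ∈ U, T^t u(x) = sup_{y ∈ B(x,r) ∩ U} (u(y) − t L((y−x)/t)); and (ii) if t, s > 0 satisfy t + s < t₀ and dist(x, ∂U) > r, then T^{t+s} u(x) = T^t (T^s u)(x). -/

import Mathlib

open Set Metric MeasureTheory Filter Bornology
open scoped RealInnerProductSpace

noncomputable section

abbrev Euc (n : ℕ) := EuclideanSpace ℝ (Fin n)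

variable {n : ℕ}

/-- The Lagrangian of `H`, an extended real number. -/
def Lag (H : Euc n → ℝ) (q : Euc n) : EReal :=
  ⨆ p : Euc n, ((⟪p, q⟫ - H p : ℝ) : EReal)

/-- `T^t u (x)`, with supremum taken over `y ∈ S`. Points `y` where the Lagrangian term
is `+∞` contribute nothing, since no real number equals `-∞`. -/
def TupOn (H : Euc n → ℝ) (S : Set (Euc n)) (u : Euc n → ℝ) (t : ℝ) (x : Euc n) : ℝ :=
  if t = 0 then u x
  else sSup {r : ℝ | ∃ y ∈ S, (r : EReal) = (u y : EReal) - (t : EReal) * Lag H (t⁻¹ • (y - x))}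

/-- `T_t u (x)`, with infimum taken over `y ∈ S`. -/
def TdnOn (H : Euc n → ℝ) (S : Set (Euc n)) (u : Euc n → ℝ) (t : ℝ) (x : Euc n) : ℝ :=
  if t = 0 then u x
  else sInf {r : ℝ | ∃ y ∈ S, (r : EReal) = (u y : EReal) + (t : EReal) * Lag H (t⁻¹ • (x - y))}

/-- `S⁺ u (x) = limsup_{t ↓ 0} (T^t u(x) - u(x))/t`. -/
def Splus (H : Euc n → ℝ) (U : Set (Euc n)) (u : Euc n → ℝ) (x : Euc n) : ℝ :=
  limsup (fun t => (TupOn H U u t x - u x) / t) (nhdsWithin 0 (Ioi 0))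

/-- The oscillation `osc_U u = sup_U u - inf_U u`. -/
def oscOn (u : Euc n → ℝ) (U : Set (Euc n)) : ℝ := sSup (u '' U) - sInf (u '' U)

/-- `U_r = {x ∈ U : dist(x, ∂U) > r}`. -/
def inUr (U : Set (Euc n)) (r : ℝ) : Set (Euc n) := {x ∈ U | r < infDist x (frontier U)}

/-- The cone function `C_k(x) = max {p·x : H(p) = k}`. -/
def coneFn (H : Euc n → ℝ) (k : ℝ) (x : Euc n) : ℝ :=
  sSup {r : ℝ | ∃ p, H p = k ∧ r = ⟪p, x⟫}

/-- The subdifferential of `H` at `p`. -/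
def subdiff (H : Euc n → ℝ) (p : Euc n) : Set (Euc n) :=
  {q | ∀ p', H p + ⟪q, p' - p⟫ ≤ H p'}

/-- `Γ_k`: subgradients of `H` at points of the level set `H⁻¹(k)`. -/
def GammaSet (H : Euc n → ℝ) (k : ℝ) : Set (Euc n) :=
  {q | ∃ p, H p = k ∧ q ∈ subdiff H p}

/-- `W_k`: subgradients of `H` at points of the sublevel set `H⁻¹([0,k])`. -/
def WSet (H : Euc n → ℝ) (k : ℝ) : Set (Euc n) :=
  {q | ∃ p, 0 ≤ H p ∧ H p ≤ k ∧ q ∈ subdiff H p}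

/-- `u ∈ Lip_loc(U)`: `u` is locally Lipschitz on `U`. -/
def LocLipOn (u : Euc n → ℝ) (U : Set (Euc n)) : Prop :=
  ∀ x ∈ U, ∃ K : NNReal, ∃ s ∈ nhdsWithin x U, LipschitzOnWith K u s

/-- `ess sup_V H(Dv)`, defined to be `+∞` if `v` is not locally Lipschitz in `V`.
Here `Dv` is the a.e.-defined gradient (Rademacher). -/
def essSupH (H : Euc n → ℝ) (V : Set (Euc n)) (v : Euc n → ℝ) : EReal :=
  haveI := Classical.propDecidable (LocLipOn v V)
  if LocLipOn v V then
    essSup (fun x => ((H (gradient v x) : ℝ) : EReal)) (volume.restrict V)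
  else ⊤

/-- `u` is absolutely subminimizing for `H` in `U`. -/
def AbsSubmin (H : Euc n → ℝ) (U : Set (Euc n)) (u : Euc n → ℝ) : Prop :=
  LocLipOn u U ∧
  ∀ V : Set (Euc n), IsOpen V → IsCompact (closure V) → closure V ⊆ U →
    ∀ v : Euc n → ℝ, LocLipOn v V → ContinuousOn v (closure V) →
      EqOn v u (frontier V) → (∀ x ∈ V, v x ≤ u x) →
        essSupH H V u ≤ essSupH H V v

/-- `u` is absolutely superminimizing for `H` in `U`. -/
def AbsSupermin (H : Euc n → ℝ) (U : Set (Euc n)) (u : Euc n → ℝ) : Prop :=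
  LocLipOn u U ∧
  ∀ V : Set (Euc n), IsOpen V → IsCompact (closure V) → closure V ⊆ U →
    ∀ v : Euc n → ℝ, LocLipOn v V → ContinuousOn v (closure V) →
      EqOn v u (frontier V) → (∀ x ∈ V, u x ≤ v x) →
        essSupH H V u ≤ essSupH H V v

/-- `u` satisfies comparisons with cones from above in `U`. -/
def CmpConesAbove (H : Euc n → ℝ) (U : Set (Euc n)) (u : Euc n → ℝ) : Prop :=
  ∀ k : ℝ, 0 ≤ k → ∀ V : Set (Euc n), IsOpen V → IsCompact (closure V) → closure V ⊆ U →
    ∀ x₀, x₀ ∉ V →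
      sSup ((fun x => u x - coneFn H k (x - x₀)) '' closure V) =
      sSup ((fun x => u x - coneFn H k (x - x₀)) '' frontier V)

/-- `u` satisfies the convexity criterion in `U`. -/
def ConvexityCriterion (H : Euc n → ℝ) (U : Set (Euc n)) (u : Euc n → ℝ) : Prop :=
  ∀ V : Set (Euc n), IsOpen V → IsCompact (closure V) → closure V ⊆ U →
    ∃ δ > (0:ℝ), ∀ x ∈ V, ConvexOn ℝ (Icc 0 δ) (fun t => TupOn H U u t x)

/-- `u` satisfies the pointwise convexity criterion in `U`. -/
def PtwiseCC (H : Euc n → ℝ) (U : Set (Euc n)) (u : Euc n → ℝ) : Prop :=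
  UpperSemicontinuousOn (Splus H U u) U ∧
  ∀ x ∈ U, ∃ δ > (0:ℝ), ConvexOn ℝ (Icc 0 δ) (fun t => TupOn H U u t x)

end

section HLHelpers

variable {n : ℕ}

lemma lag_ge (H : Euc n → ℝ) (p q : Euc n) :
    ((⟪p, q⟫ - H p : ℝ) : EReal) ≤ Lag H q := le_iSup (fun p => ((⟪p, q⟫ - H p : ℝ) : EReal)) p

lemma lag_nonneg (H : Euc n → ℝ) (hH0 : H 0 = 0) (q : Euc n) : 0 ≤ Lag H q := by
  have h := lag_ge H 0 q
  simpa [inner_zero_left, hH0] using h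

lemma lag_zero (H : Euc n → ℝ) (hH0 : H 0 = 0) (hnn : ∀ p, 0 ≤ H p) : Lag H 0 = 0 := by
  refine le_antisymm (iSup_le fun p => ?_) (lag_nonneg H hH0 0)
  have : (⟪p, (0:Euc n)⟫ - H p : ℝ) ≤ 0 := by simp [inner_zero_right]; exact hnn p
  exact_mod_cast this

/-- preconnected set meeting U and its complement meets the frontier -/
lemma preconn_frontier {X : Type*} [TopologicalSpace X] {s U : Set X}
    (hs : IsPreconnected s) (h1 : (s ∩ U).Nonempty) (h2 : (s \ U).Nonempty) :
    (s ∩ frontier U).Nonempty := by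
  by_contra hemp
  rw [not_nonempty_iff_eq_empty] at hemp
  have hdisj : ∀ a ∈ s, a ∉ frontier U := fun a ha hfa =>
    (eq_empty_iff_forall_notMem.mp hemp a) ⟨ha, hfa⟩
  have hsub : s ⊆ interior U ∪ interior Uᶜ := by
    intro a ha
    by_cases hc1 : a ∈ closure Uᶜ
    · by_cases hc2 : a ∈ closure U
      · exact absurd (by rw [frontier_eq_closure_inter_closure]; exact ⟨hc2, hc1⟩) (hdisj a ha)
      · right; rwa [interior_compl, mem_compl_iff]
    · left; rwa [← compl_compl (interior U), ← closure_compl, mem_compl_iff]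
  have h1' : (s ∩ interior U).Nonempty := by
    obtain ⟨a, has, haU⟩ := h1
    refine ⟨a, has, ?_⟩
    rcases hsub has with h | h
    · exact h
    · exact absurd (interior_subset h) (by simp [haU])
  have h2' : (s ∩ interior Uᶜ).Nonempty := by
    obtain ⟨a, has, haU⟩ := h2
    refine ⟨a, has, ?_⟩
    rcases hsub has with h | h
    · exact absurd (interior_subset h) haU
    · exact h
  obtain ⟨a, -, haU, haUc⟩ := hs (interior U) (interior Uᶜ) isOpen_interior isOpen_interior hsub h1' h2'
  exact (interior_subset haUc) (interior_subset haU)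

lemma ball_subset_of_infDist {U : Set (Euc n)} {x : Euc n} {r : ℝ}
    (hx : x ∈ U) (h : r < infDist x (frontier U)) : ball x r ⊆ U := by
  intro w hw
  by_contra hwU
  have hr : 0 < r := lt_of_le_of_lt dist_nonneg hw
  obtain ⟨z, hzball, hzf⟩ := preconn_frontier (convex_ball x r).isPreconnected
    ⟨x, mem_ball_self hr, hx⟩ ⟨w, hw, hwU⟩
  have : infDist x (frontier U) ≤ dist x z := infDist_le_dist_of_mem hzf
  rw [mem_ball'] at hzball
  linarith

lemma mem_tset {H : Euc n → ℝ} (hH0 : H 0 = 0) {S : Set (Euc n)} {u : Euc n → ℝ}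
    {t : ℝ} {x : Euc n} {a : ℝ} (ht : 0 < t) :
    a ∈ {r : ℝ | ∃ y ∈ S, (r : EReal) = (u y : EReal) - (t : EReal) * Lag H (t⁻¹ • (y - x))}
    ↔ ∃ y ∈ S, ∃ l : ℝ, 0 ≤ l ∧ Lag H (t⁻¹ • (y - x)) = (l : EReal) ∧ a = u y - t * l := by
  constructor
  · rintro ⟨y, hy, heq⟩
    have h0 : (0:EReal) ≤ Lag H (t⁻¹ • (y - x)) := lag_nonneg H hH0 _
    have hne_top : Lag H (t⁻¹ • (y - x)) ≠ ⊤ := by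
      intro htop
      rw [htop, EReal.coe_mul_top_of_pos ht] at heq
      simp only [sub_eq_add_neg, EReal.neg_top, EReal.add_bot] at heq
      exact EReal.coe_ne_bot a heq
    have hne_bot : Lag H (t⁻¹ • (y - x)) ≠ ⊥ := ne_of_gt (lt_of_lt_of_le (EReal.bot_lt_zero) h0)
    set l := (Lag H (t⁻¹ • (y - x))).toReal with hl
    have hLl : Lag H (t⁻¹ • (y - x)) = (l : EReal) := (EReal.coe_toReal hne_top hne_bot).symm
    have hl0 : 0 ≤ l := by rw [hLl] at h0; exact_mod_cast h0
    refine ⟨y, hy, l, hl0, hLl, ?_⟩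
    rw [hLl, ← EReal.coe_mul, ← EReal.coe_sub] at heq
    exact_mod_cast heq
  · rintro ⟨y, hy, l, _, hLl, rfl⟩
    exact ⟨y, hy, by rw [hLl, ← EReal.coe_mul, ← EReal.coe_sub]⟩

lemma self_mem_tset {H : Euc n → ℝ} (hH0 : H 0 = 0) (hnn : ∀ p, 0 ≤ H p)
    {S : Set (Euc n)} {u : Euc n → ℝ} {t : ℝ} {x : Euc n} (ht : 0 < t) (hx : x ∈ S) :
    u x ∈ {r : ℝ | ∃ y ∈ S, (r : EReal) = (u y : EReal) - (t : EReal) * Lag H (t⁻¹ • (y - x))} :=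
  (mem_tset hH0 ht).mpr ⟨x, hx, 0, le_refl 0,
    by rw [sub_self, smul_zero, lag_zero H hH0 hnn]; norm_cast, by ring⟩

lemma tset_bddAbove {H : Euc n → ℝ} (hH0 : H 0 = 0) {S : Set (Euc n)} {u : Euc n → ℝ}
    {t : ℝ} {x : Euc n} {b : ℝ} (ht : 0 < t) (hb : ∀ y ∈ S, u y ≤ b) :
    BddAbove {r : ℝ | ∃ y ∈ S, (r : EReal) = (u y : EReal) - (t : EReal) * Lag H (t⁻¹ • (y - x))} := by
  refine ⟨b, fun a ha => ?_⟩
  obtain ⟨y, hy, l, hl0, -, rfl⟩ := (mem_tset hH0 ht).mp ha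
  have := hb y hy
  nlinarith

lemma lag_lb {H : Euc n → ℝ} (hH0 : H 0 = 0) (hcont : Continuous H) {δ : ℝ} (hδ : 0 < δ) :
    ∃ M : ℝ, 0 ≤ M ∧ ∀ q : Euc n, ((δ * ‖q‖ - M : ℝ) : EReal) ≤ Lag H q := by
  obtain ⟨M, hM⟩ := (isCompact_closedBall (0 : Euc n) δ).exists_bound_of_continuousOn
    hcont.continuousOn
  have hM0 : 0 ≤ M := le_trans (norm_nonneg _) (hM 0 (mem_closedBall_self hδ.le))
  refine ⟨M, hM0, fun q => ?_⟩
  by_cases hq : q = 0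
  · subst hq
    have : (δ * ‖(0:Euc n)‖ - M : ℝ) ≤ 0 := by simp [hM0]
    calc ((δ * ‖(0:Euc n)‖ - M : ℝ) : EReal) ≤ ((0:ℝ):EReal) := by exact_mod_cast this
      _ ≤ Lag H 0 := by exact_mod_cast lag_nonneg H hH0 0
  · set p := (δ / ‖q‖) • q with hp
    have hqn : 0 < ‖q‖ := norm_pos_iff.mpr hq
    have hpn : ‖p‖ = δ := by
      rw [hp, norm_smul, Real.norm_eq_abs, abs_div, abs_of_pos hδ, abs_of_pos hqn]
      field_simp
    have hip : ⟪p, q⟫ = δ * ‖q‖ := by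
      rw [hp, real_inner_smul_left, real_inner_self_eq_norm_mul_norm]
      field_simp
    have hHp : H p ≤ M := le_trans (le_abs_self _)
      (by simpa [Real.norm_eq_abs] using hM p (by simp [mem_closedBall, dist_eq_norm, hpn]))
    calc ((δ * ‖q‖ - M : ℝ) : EReal) ≤ ((⟪p, q⟫ - H p : ℝ) : EReal) := by
          apply EReal.coe_le_coe_iff.mpr; rw [hip]; linarith
      _ ≤ Lag H q := lag_ge H p q

lemma lag_combo {H : Euc n → ℝ} {t s la lb : ℝ} (ht : 0 < t) (hs : 0 < s)
    {a b w : Euc n} (hw : (t + s) • w = t • a + s • b)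
    (hla : Lag H a ≤ (la : EReal)) (hlb : Lag H b ≤ (lb : EReal)) :
    Lag H w ≤ (((t * la + s * lb) / (t + s) : ℝ) : EReal) := by
  apply iSup_le; intro p
  apply EReal.coe_le_coe_iff.mpr
  have h1 : ⟪p, a⟫ - H p ≤ la := by exact_mod_cast (lag_ge H p a).trans hla
  have h2 : ⟪p, b⟫ - H p ≤ lb := by exact_mod_cast (lag_ge H p b).trans hlb
  have hw' : (t + s) * ⟪p, w⟫ = t * ⟪p, a⟫ + s * ⟪p, b⟫ := by
    have := congrArg (fun v : Euc n => ⟪p, v⟫) hw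
    simpa [inner_smul_right, inner_add_right] using this
  rw [le_div_iff₀ (by positivity : (0:ℝ) < t + s)]
  nlinarith

lemma ereal_between {X : EReal} {m : ℝ} (h0 : 0 ≤ X) (hm : X ≤ (m : EReal)) :
    ∃ l : ℝ, X = (l : EReal) ∧ 0 ≤ l ∧ l ≤ m := by
  have hne_top : X ≠ ⊤ := ne_top_of_le_ne_top (EReal.coe_ne_top m) hm
  have hne_bot : X ≠ ⊥ := ne_of_gt (lt_of_lt_of_le EReal.bot_lt_zero h0)
  rw [← EReal.coe_toReal hne_top hne_bot] at h0 hm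
  exact ⟨X.toReal, (EReal.coe_toReal hne_top hne_bot).symm, by exact_mod_cast h0,
    by exact_mod_cast hm⟩

end HLHelpers

/-- Localization and semigroup property of the Hopf–Lax flow, for small times depending
only on `L`, `α` and `r`. -/
theorem hopf_lax_localization {n : ℕ} (hn : 1 ≤ n) (H : Euc n → ℝ)
    (hHconv : ConvexOn ℝ Set.univ H) (hH0 : H 0 = 0) (hHnonneg : ∀ p, 0 ≤ H p)
    (hHzb : Bornology.IsBounded {p : Euc n | H p = 0})
    (hHzi : interior {p : Euc n | H p = 0} = ∅) :
    ∀ α r : ℝ, 0 < α → 0 < r → ∃ t₀ > (0:ℝ),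
      ∀ U : Set (Euc n), IsOpen U →
        ∀ u : Euc n → ℝ, UpperSemicontinuousOn u U → Bornology.IsBounded (u '' U) →
          oscOn u U ≤ α →
          (∀ t : ℝ, 0 < t → t < t₀ → ∀ x ∈ U,
            TupOn H U u t x = TupOn H (ball x r ∩ U) u t x) ∧
          (∀ t s : ℝ, 0 < t → 0 < s → t + s < t₀ → ∀ x ∈ U,
            r < infDist x (frontier U) →
            TupOn H U u (t + s) x = TupOn H U (fun y => TupOn H U u s y) t x) := by
  intro α r hα hr
  have hHcont : Continuous H := by
    have := hHconv.continuousOn isOpen_univ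
    exact continuousOn_univ.mp this
  set δ := (α + 1) / r with hδdef
  have hδ : 0 < δ := by positivity
  obtain ⟨M, hM0, hMlb⟩ := lag_lb hH0 hHcont hδ
  refine ⟨1 / (M + 1), by positivity, ?_⟩
  have key : ∀ t : ℝ, 0 < t → t < 1 / (M + 1) → ∀ q : Euc n, r ≤ ‖q‖ →
      ∀ l : ℝ, Lag H (t⁻¹ • q) = (l : EReal) → α ≤ t * l := by
    intro t ht ht0 q hq l hLl
    have h1 : (δ * ‖t⁻¹ • q‖ - M : ℝ) ≤ l := by
      have := hMlb (t⁻¹ • q); rw [hLl] at this; exact_mod_cast this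
    have hnq : ‖t⁻¹ • q‖ = ‖q‖ / t := by
      rw [norm_smul, Real.norm_eq_abs, abs_of_pos (inv_pos.mpr ht)]; field_simp
    rw [hnq] at h1
    have hc : t * (‖q‖ / t) = ‖q‖ := by field_simp
    have h2 : δ * ‖q‖ - t * M ≤ t * l := by
      nlinarith [mul_le_mul_of_nonneg_left h1 ht.le]
    have h3 : t * M ≤ 1 := by
      have h4 : t * M ≤ (1 / (M + 1)) * M := by nlinarith
      have h5 : (1 / (M + 1)) * M ≤ 1 := by
        rw [div_mul_eq_mul_div, one_mul, div_le_one (by linarith)]; linarith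
      linarith
    have h4 : α + 1 ≤ δ * ‖q‖ := by
      have hδr : δ * r = α + 1 := by rw [hδdef]; field_simp
      nlinarith
    linarith
  intro U hUopen u _ hub hosc
  have hbddab : BddAbove (u '' U) := hub.bddAbove
  have hbddbe : BddBelow (u '' U) := hub.bddBelow
  set b := sSup (u '' U) with hbdef
  have hub' : ∀ y ∈ U, u y ≤ b := fun y hy => le_csSup hbddab ⟨y, hy, rfl⟩
  have hosc' : ∀ x ∈ U, ∀ y ∈ U, u y ≤ u x + α := by
    intro x hx y hy
    simp only [oscOn] at hosc
    have h1 : u y ≤ b := hub' y hy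
    have h2 : sInf (u '' U) ≤ u x := csInf_le hbddbe ⟨x, hx, rfl⟩
    linarith
  constructor
  · -- part (i)
    intro t ht ht0 x hx
    rw [TupOn, TupOn, if_neg (ne_of_gt ht), if_neg (ne_of_gt ht)]
    have hxball : x ∈ ball x r ∩ U := ⟨mem_ball_self hr, hx⟩
    have bddA := tset_bddAbove (H := H) (u := u) (t := t) (x := x) hH0 ht hub'
    have hBA : {r' : ℝ | ∃ y ∈ ball x r ∩ U,
        (r' : EReal) = (u y : EReal) - (t : EReal) * Lag H (t⁻¹ • (y - x))} ⊆
        {r' : ℝ | ∃ y ∈ U, (r' : EReal) = (u y : EReal) - (t : EReal) * Lag H (t⁻¹ • (y - x))} := by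
      rintro a ⟨y, hy, hyq⟩; exact ⟨y, hy.2, hyq⟩
    have bddB := bddA.mono hBA
    apply le_antisymm
    · apply csSup_le ⟨u x, self_mem_tset hH0 hHnonneg ht hx⟩
      intro a ha
      obtain ⟨y, hy, l, hl0, hLl, rfl⟩ := (mem_tset hH0 ht).mp ha
      by_cases hyb : y ∈ ball x r
      · exact le_csSup bddB ((mem_tset hH0 ht).mpr ⟨y, ⟨hyb, hy⟩, l, hl0, hLl, rfl⟩)
      · have hdist : r ≤ ‖y - x‖ := by
          rw [mem_ball, dist_eq_norm] at hyb; push_neg at hyb; exact hyb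
        have hαl := key t ht ht0 (y - x) hdist l hLl
        have hxB : u x ≤ sSup {r' : ℝ | ∃ y ∈ ball x r ∩ U,
            (r' : EReal) = (u y : EReal) - (t : EReal) * Lag H (t⁻¹ • (y - x))} :=
          le_csSup bddB (self_mem_tset hH0 hHnonneg ht hxball)
        have := hosc' x hx y hy
        linarith
    · exact csSup_le_csSup bddA ⟨u x, self_mem_tset hH0 hHnonneg ht hxball⟩ hBA
  · -- part (ii)
    intro t s ht hs hts x hx hrx
    have hball : ball x r ⊆ U := ball_subset_of_infDist hx hrx
    have hts0 : 0 < t + s := by linarith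
    set v : Euc n → ℝ := fun y => TupOn H U u s y with hv
    have hvset : ∀ z : Euc n, v z = sSup {r' : ℝ | ∃ y ∈ U,
        (r' : EReal) = (u y : EReal) - (s : EReal) * Lag H (s⁻¹ • (y - z))} := by
      intro z; rw [hv]; simp only [TupOn, if_neg (ne_of_gt hs)]
    have hvle : ∀ z ∈ U, v z ≤ b := by
      intro z hz
      rw [hvset z]
      apply csSup_le ⟨u z, self_mem_tset hH0 hHnonneg hs hz⟩
      intro a ha
      obtain ⟨y, hy, l, hl0, hLl, rfl⟩ := (mem_tset hH0 hs).mp ha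
      have := hub' y hy
      nlinarith
    have hvge : ∀ z ∈ U, u z ≤ v z := by
      intro z hz
      rw [hvset z]
      exact le_csSup (tset_bddAbove hH0 hs hub') (self_mem_tset hH0 hHnonneg hs hz)
    rw [TupOn, TupOn, if_neg (ne_of_gt hts0), if_neg (ne_of_gt ht)]
    have bddA := tset_bddAbove (H := H) (u := u) (t := t + s) (x := x) hH0 hts0 hub'
    have bddB := tset_bddAbove (H := H) (u := v) (t := t) (x := x) hH0 ht hvle
    have memA := self_mem_tset (H := H) (u := u) (t := t + s) hH0 hHnonneg hts0 hx
    have memB := self_mem_tset (H := H) (u := v) (t := t) hH0 hHnonneg ht hx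
    apply le_antisymm
    · apply csSup_le ⟨u x, memA⟩
      intro a ha
      obtain ⟨y, hy, l, hl0, hLl, rfl⟩ := (mem_tset hH0 hts0).mp ha
      by_cases hyb : y ∈ ball x r
      · set c := t / (t + s) with hcdef
        have hc0 : 0 ≤ c := by positivity
        have hc1 : c ≤ 1 := by rw [hcdef, div_le_one hts0]; linarith
        set z := x + c • (y - x) with hzdef
        have hzx : z - x = c • (y - x) := by rw [hzdef]; abel
        have hzb : z ∈ ball x r := by
          rw [mem_ball, dist_eq_norm, hzx, norm_smul, Real.norm_eq_abs, abs_of_nonneg hc0]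
          rw [mem_ball, dist_eq_norm] at hyb
          nlinarith [norm_nonneg (y - x)]
        have hzU : z ∈ U := hball hzb
        have hz1 : t⁻¹ • (z - x) = (t + s)⁻¹ • (y - x) := by
          rw [hzx, smul_smul]; congr 1; rw [hcdef]; field_simp
        have hz2 : s⁻¹ • (y - z) = (t + s)⁻¹ • (y - x) := by
          have hyz : y - z = (1 - c) • (y - x) := by rw [hzdef, sub_smul, one_smul]; abel
          rw [hyz, smul_smul]; congr 1; rw [hcdef]; field_simp; ring
        have hle1 : u y - s * l ≤ v z := by
          rw [hvset z]
          exact le_csSup (tset_bddAbove hH0 hs hub')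
            ((mem_tset hH0 hs).mpr ⟨y, hy, l, hl0, by rw [hz2]; exact hLl, rfl⟩)
        have hle2 := le_csSup bddB ((mem_tset hH0 ht).mpr
          ⟨z, hzU, l, hl0, by rw [hz1]; exact hLl, rfl⟩)
        have hexp : (t + s) * l = t * l + s * l := by ring
        linarith
      · have hdist : r ≤ ‖y - x‖ := by
          rw [mem_ball, dist_eq_norm] at hyb; push_neg at hyb; exact hyb
        have hαl := key (t + s) hts0 hts (y - x) hdist l hLl
        have h1 := le_csSup bddB memB
        have h2 := hvge x hx
        have h3 := hosc' x hx y hy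
        linarith
    · apply csSup_le ⟨v x, memB⟩
      intro a ha
      obtain ⟨z, hz, l1, hl10, hLl1, rfl⟩ := (mem_tset hH0 ht).mp ha
      have hvz : v z ≤ sSup {r' : ℝ | ∃ y ∈ U,
          (r' : EReal) = (u y : EReal) - ((t + s : ℝ) : EReal) * Lag H ((t + s)⁻¹ • (y - x))}
          + t * l1 := by
        rw [hvset z]
        apply csSup_le ⟨u z, self_mem_tset hH0 hHnonneg hs hz⟩
        intro a' ha'
        obtain ⟨y, hy, l2, hl20, hLl2, rfl⟩ := (mem_tset hH0 hs).mp ha'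
        have hwc : (t + s) • ((t + s)⁻¹ • (y - x)) =
            t • (t⁻¹ • (z - x)) + s • (s⁻¹ • (y - z)) := by
          rw [smul_inv_smul₀ (ne_of_gt hts0), smul_inv_smul₀ (ne_of_gt ht),
            smul_inv_smul₀ (ne_of_gt hs)]
          abel
        have hcombo := lag_combo ht hs hwc (le_of_eq hLl1) (le_of_eq hLl2)
        obtain ⟨lw, hLw, hlw0, hlwm⟩ := ereal_between (lag_nonneg H hH0 _) hcombo
        have h1 := le_csSup bddA ((mem_tset hH0 hts0).mpr ⟨y, hy, lw, hlw0, hLw, rfl⟩)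
        have h2 : (t + s) * lw ≤ t * l1 + s * l2 := by
          rw [mul_comm]; exact (le_div_iff₀ hts0).mp hlwm
        nlinarith
      linarith
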